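/- Define h_{i,j} ∈ {0,1} ⊂ ℤ by h_{i,j} = 1 if i+j = 2^k − 2 for some positive integer k, and h_{i,j} = 0 otherwise. Then for every n ≥ 1 the determinant of the n×n matrix (h_{i,j})_{0≤i,j<n} equals ±1. -/

import Mathlib

open scoped Classical in
/-- h_{i,j} = 1 if i+j = 2^k - 2 for some k ≥ 1, else 0. -/
noncomputable def hEnt (i j : ℕ) : ℤ :=
  if ∃ k : ℕ, 1 ≤ k ∧ i + j = 2 ^ k - 2 then 1 else 0

/-- A "good pair": `f` is a bijection of `[0,n)` with inverse `g` such that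
`i + f i + 2` is always a power of two. -/
def GoodPair (n : ℕ) (f g : ℕ → ℕ) : Prop :=
  (∀ i, i < n → f i < n) ∧ (∀ i, i < n → g i < n) ∧
  (∀ i, i < n → g (f i) = i) ∧ (∀ i, i < n → f (g i) = i) ∧
  (∀ i, i < n → ∃ k, i + f i + 2 = 2 ^ k)

lemma exists_K (n : ℕ) (hn : 1 ≤ n) :
    ∃ K, 1 ≤ K ∧ n + 1 ≤ 2 ^ K ∧ 2 ^ K ≤ 2 * n := by
  have ha := Nat.lt_pow_succ_log_self (b := 2) (by norm_num) n
  have hb := Nat.pow_log_le_self 2 (show n ≠ 0 by omega)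
  have hc : (2:ℕ) ^ (Nat.log 2 n + 1) = 2 * 2 ^ Nat.log 2 n := by ring
  exact ⟨Nat.log 2 n + 1, by omega, by omega, by omega⟩

lemma forced {n f g K} (hgp : GoodPair n f g) (hK1 : 1 ≤ K)
    (hKlo : n + 1 ≤ 2 ^ K) (hKhi : 2 ^ K ≤ 2 * n) :
    ∀ i, i < n → 2 ^ K ≤ n + 1 + i → i + f i + 2 = 2 ^ K ∧ i + g i + 2 = 2 ^ K := by
  obtain ⟨h1, h2, h3, h4, h5⟩ := hgp
  have e1 : (2:ℕ) ^ K = 2 * 2 ^ (K - 1) := by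
    conv_lhs => rw [show K = (K - 1) + 1 by omega]
    rw [pow_succ]; ring
  -- if i+j+2 is a power of two, i,j < n, and the sum exceeds 2^(K-1), it is 2^K
  have key : ∀ i j k, i < n → j < n → 2 ^ (K - 1) < i + j + 2 →
      i + j + 2 = 2 ^ k → i + j + 2 = 2 ^ K := by
    intro i j k hi hj htop hk
    have hge : K ≤ k := by
      by_contra hc
      have : 2 ^ k ≤ 2 ^ (K - 1) := Nat.pow_le_pow_right (by norm_num) (by omega)
      omega
    have hle : k ≤ K := by
      by_contra hc
      have h2 : 2 ^ (K + 1) ≤ 2 ^ k := Nat.pow_le_pow_right (by norm_num) (by omega)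
      have e2 : (2:ℕ) ^ (K + 1) = 2 * 2 ^ K := by rw [pow_succ]; ring
      omega
    have hkK : k = K := by omega
    exact hkK ▸ hk
  -- top half: rows and columns forced directly
  have htopf : ∀ i, i < n → 2 ^ (K - 1) < i + 2 → i + f i + 2 = 2 ^ K := by
    intro i hi ht
    obtain ⟨k, hk⟩ := h5 i hi
    exact key i (f i) k hi (h1 i hi) (by omega) hk
  have htopg : ∀ i, i < n → 2 ^ (K - 1) < i + 2 → i + g i + 2 = 2 ^ K := by
    intro i hi ht
    obtain ⟨k, hk⟩ := h5 (g i) (h2 i hi)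
    rw [h4 i hi] at hk
    have := key (g i) i k (h2 i hi) hi (by omega) hk
    omega
  -- general case
  intro i hi hge
  by_cases ht : 2 ^ (K - 1) < i + 2
  · exact ⟨htopf i hi ht, htopg i hi ht⟩
  · -- lower part of the forced interval: use the reflected index i' = 2^K - 2 - i
    have h2i : i + 2 ≤ 2 ^ K := by omega
    set i' := 2 ^ K - (i + 2) with hi'
    have hi'n : i' < n := by omega
    have hi't : 2 ^ (K - 1) < i' + 2 := by omega
    have hgi' : i' + g i' + 2 = 2 ^ K := htopg i' hi'n hi't
    have hfi' : i' + f i' + 2 = 2 ^ K := htopf i' hi'n hi't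
    have hg : g i' = i := by omega
    have hf : f i' = i := by omega
    constructor
    · have : f i = f (g i') := by rw [hg]
      rw [this, h4 i' hi'n]; omega
    · have : g i = g (f i') := by rw [hf]
      rw [this, h3 i' hi'n]; omega

lemma restrict {n f g K} (hgp : GoodPair n f g) (hK1 : 1 ≤ K)
    (hKlo : n + 1 ≤ 2 ^ K) (hKhi : 2 ^ K ≤ 2 * n) :
    GoodPair (2 ^ K - (n + 1)) f g := by
  have hfor := forced hgp hK1 hKlo hKhi
  obtain ⟨h1, h2, h3, h4, h5⟩ := hgp
  set m := 2 ^ K - (n + 1) with hm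
  have hmn : m < n := by omega
  have hfm : ∀ i, i < m → f i < m := by
    intro i hi
    by_contra hc
    have hfin : f i < n := h1 i (by omega)
    have := (hfor (f i) hfin (by omega)).2
    rw [h3 i (by omega)] at this
    omega
  have hgm : ∀ i, i < m → g i < m := by
    intro i hi
    by_contra hc
    have hgin : g i < n := h2 i (by omega)
    have := (hfor (g i) hgin (by omega)).1
    rw [h4 i (by omega)] at this
    omega
  exact ⟨hfm, hgm, fun i hi => h3 i (by omega), fun i hi => h4 i (by omega),
    fun i hi => h5 i (by omega)⟩

lemma goodPair_unique : ∀ n f g f' g', GoodPair n f g → GoodPair n f' g' →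
    ∀ i, i < n → f i = f' i := by
  intro n
  induction n using Nat.strong_induction_on with
  | _ n IH =>
    intro f g f' g' h h' i hi
    have hn : 1 ≤ n := by omega
    obtain ⟨K, hK1, hKlo, hKhi⟩ := exists_K n hn
    by_cases hc : 2 ^ K ≤ n + 1 + i
    · have a := (forced h hK1 hKlo hKhi i hi hc).1
      have b := (forced h' hK1 hKlo hKhi i hi hc).1
      omega
    · exact IH (2 ^ K - (n + 1)) (by omega) f g f' g'
        (restrict h hK1 hKlo hKhi) (restrict h' hK1 hKlo hKhi) i (by omega)

lemma goodPair_exists : ∀ n, ∃ f g, GoodPair n f g := by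
  intro n
  induction n using Nat.strong_induction_on with
  | _ n IH =>
    rcases Nat.eq_zero_or_pos n with rfl | hn
    · exact ⟨id, id, fun i hi => by omega, fun i hi => by omega,
        fun i hi => by omega, fun i hi => by omega, fun i hi => by omega⟩
    obtain ⟨K, hK1, hKlo, hKhi⟩ := exists_K n hn
    set m := 2 ^ K - (n + 1) with hm
    have hmn : m < n := by omega
    obtain ⟨f₀, g₀, hgp₀⟩ := IH m hmn
    obtain ⟨h1, h2, h3, h4, h5⟩ := hgp₀
    refine ⟨fun i => if 2 ^ K ≤ n + 1 + i then 2 ^ K - (i + 2) else f₀ i,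
            fun i => if 2 ^ K ≤ n + 1 + i then 2 ^ K - (i + 2) else g₀ i,
            ?_, ?_, ?_, ?_, ?_⟩
    · intro i hi
      dsimp only
      by_cases hc : 2 ^ K ≤ n + 1 + i
      · rw [if_pos hc]; omega
      · rw [if_neg hc]; have := h1 i (by omega); omega
    · intro i hi
      dsimp only
      by_cases hc : 2 ^ K ≤ n + 1 + i
      · rw [if_pos hc]; omega
      · rw [if_neg hc]; have := h2 i (by omega); omega
    · intro i hi
      dsimp only
      by_cases hc : 2 ^ K ≤ n + 1 + i
      · have h1' : f₀ (2 ^ K - (i + 2)) = f₀ (2 ^ K - (i + 2)) := rfl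
        rw [if_pos hc, if_pos (by omega)]; omega
      · rw [if_neg hc]
        have hf0 : f₀ i < m := h1 i (by omega)
        rw [if_neg (by omega)]
        exact h3 i (by omega)
    · intro i hi
      dsimp only
      by_cases hc : 2 ^ K ≤ n + 1 + i
      · rw [if_pos hc, if_pos (by omega)]; omega
      · rw [if_neg hc]
        have hg0 : g₀ i < m := h2 i (by omega)
        rw [if_neg (by omega)]
        exact h4 i (by omega)
    · intro i hi
      dsimp only
      by_cases hc : 2 ^ K ≤ n + 1 + i
      · rw [if_pos hc]; exact ⟨K, by omega⟩
      · rw [if_neg hc]; exact h5 i (by omega)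

lemma hEnt_eq_one {i j : ℕ} (h : ∃ k, i + j + 2 = 2 ^ k) : hEnt i j = 1 := by
  obtain ⟨k, hk⟩ := h
  have hk1 : 1 ≤ k := by
    rcases Nat.eq_zero_or_pos k with rfl | h
    · simp at hk
    · omega
  rw [hEnt, if_pos ⟨k, hk1, by omega⟩]

lemma hEnt_pow {i j : ℕ} (h : hEnt i j ≠ 0) : ∃ k, i + j + 2 = 2 ^ k := by
  rw [hEnt] at h
  by_cases hc : ∃ k : ℕ, 1 ≤ k ∧ i + j = 2 ^ k - 2
  · obtain ⟨k, hk1, hk2⟩ := hc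
    have : (2:ℕ) ^ 1 ≤ 2 ^ k := Nat.pow_le_pow_right (by norm_num) hk1
    exact ⟨k, by simp at this; omega⟩
  · rw [if_neg hc] at h; exact absurd rfl h

theorem det_catalan_mod_two_hankel (n : ℕ) (hn : 1 ≤ n) :
    Matrix.det (fun i j : Fin n => hEnt (i : ℕ) (j : ℕ)) = 1 ∨
      Matrix.det (fun i j : Fin n => hEnt (i : ℕ) (j : ℕ)) = -1 := by
  classical
  obtain ⟨f, g, hgp⟩ := goodPair_exists n
  obtain ⟨h1, h2, h3, h4, h5⟩ := hgp
  set σ₀ : Equiv.Perm (Fin n) :=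
    { toFun := fun i => ⟨f i, h1 i i.2⟩
      invFun := fun i => ⟨g i, h2 i i.2⟩
      left_inv := fun i => Fin.ext (h3 i i.2)
      right_inv := fun i => Fin.ext (h4 i i.2) } with hσ₀
  rw [Matrix.det_apply' (fun i j : Fin n => hEnt (i : ℕ) (j : ℕ))]
  rw [Finset.sum_eq_single σ₀]
  · have hprod : ∏ i : Fin n, hEnt ((σ₀ i : Fin n) : ℕ) (i : ℕ) = 1 := by
      apply Finset.prod_eq_one
      intro i _
      apply hEnt_eq_one
      obtain ⟨k, hk⟩ := h5 i i.2
      exact ⟨k, by simp [hσ₀]; omega⟩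
    rw [hprod, mul_one]
    rcases Int.units_eq_one_or (Equiv.Perm.sign σ₀) with h | h
    · left; rw [h]; rfl
    · right; rw [h]; rfl
  · intro σ _ hσ
    have hzero : ∏ i : Fin n, hEnt ((σ i : Fin n) : ℕ) (i : ℕ) = 0 := by
      by_contra hne
      have hall : ∀ i : Fin n, hEnt ((σ i : Fin n) : ℕ) (i : ℕ) ≠ 0 := by
        intro i
        intro h0
        apply hne
        exact Finset.prod_eq_zero (Finset.mem_univ i) h0
      -- build a good pair from σ
      set F : ℕ → ℕ := fun i => if h : i < n then ((σ ⟨i, h⟩ : Fin n) : ℕ) else 0 with hF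
      set G : ℕ → ℕ := fun i => if h : i < n then ((σ⁻¹ ⟨i, h⟩ : Fin n) : ℕ) else 0 with hG
      have hgpσ : GoodPair n F G := by
        refine ⟨?_, ?_, ?_, ?_, ?_⟩
        · intro i hi; rw [hF]; simp only [dif_pos hi]; exact (σ ⟨i, hi⟩).2
        · intro i hi; rw [hG]; simp only [dif_pos hi]; exact (σ⁻¹ ⟨i, hi⟩).2
        · intro i hi
          rw [hF, hG]
          simp only [dif_pos hi, dif_pos (σ ⟨i, hi⟩).2]
          have : (⟨((σ ⟨i, hi⟩ : Fin n) : ℕ), (σ ⟨i, hi⟩).2⟩ : Fin n) = σ ⟨i, hi⟩ :=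
            Fin.ext rfl
          rw [this, Equiv.Perm.coe_inv, Equiv.symm_apply_apply]
        · intro i hi
          rw [hF, hG]
          simp only [dif_pos hi, dif_pos (σ⁻¹ ⟨i, hi⟩).2]
          have : (⟨((σ⁻¹ ⟨i, hi⟩ : Fin n) : ℕ), (σ⁻¹ ⟨i, hi⟩).2⟩ : Fin n) = σ⁻¹ ⟨i, hi⟩ :=
            Fin.ext rfl
          rw [this, Equiv.Perm.coe_inv, Equiv.apply_symm_apply]
        · intro i hi
          rw [hF]
          simp only [dif_pos hi]
          obtain ⟨k, hk⟩ := hEnt_pow (hall ⟨i, hi⟩)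
          have hv : ((⟨i, hi⟩ : Fin n) : ℕ) = i := rfl
          rw [hv] at hk
          exact ⟨k, by omega⟩
      have heq : ∀ i, i < n → F i = f i := goodPair_unique n F G f g hgpσ ⟨h1, h2, h3, h4, h5⟩
      apply hσ
      ext i
      have := heq i i.2
      rw [hF] at this
      simp only [dif_pos i.2] at this
      have hi : (⟨(i : ℕ), i.2⟩ : Fin n) = i := Fin.ext rfl
      rw [hi] at this
      rw [hσ₀]
      simp [this]
    rw [hzero, mul_zero]
  · intro h; exact absurd (Finset.mem_univ σ₀) h
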